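/- arXiv:2506.14351 — 2 statements merged into one kernel-verified Lean document; each statement's English description precedes it below -/
import Mathlib

section
/- Let u ∈ M_n(ℂ) be a complex Hadamard matrix and set u₁ := (I_n ⊗ u)·D_u where D_u := √n·Σ_{i,j} \overline{u_{ij}}(E_{ii} ⊗ E_{jj}). Then Ad_{u₁}(I_n ⊗ e₁) = e₂, where e₁ := (1/n)·Σ_{i,j=1}^n E_{ij} and e₂ := Σ_{i=1}^n E_{ii} ⊗ E_{ii}. -/
open Matrix Kronecker

/-- A complex Hadamard matrix of order `n`. -/
def IsCHM {n : ℕ} (u : Matrix (Fin n) (Fin n) ℂ) : Prop :=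
  u ∈ Matrix.unitaryGroup (Fin n) ℂ ∧ ∀ i j, ‖u i j‖ = 1 / Real.sqrt n

/-- `D_u := √n · Σ_{i,j} conj(u_{ij}) (E_{ii} ⊗ E_{jj})`. -/
noncomputable def Du {n : ℕ} (u : Matrix (Fin n) (Fin n) ℂ) :
    Matrix (Fin n × Fin n) (Fin n × Fin n) ℂ :=
  ((Real.sqrt n : ℝ) : ℂ) •
    ∑ i : Fin n, ∑ j : Fin n, (starRingEnd ℂ) (u i j) •
      (Matrix.single i i (1 : ℂ) ⊗ₖ Matrix.single j j (1 : ℂ))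

/-- The projection `e₁ := (1/n) Σ_{i,j} E_{ij}`. -/
noncomputable def e1 (n : ℕ) : Matrix (Fin n) (Fin n) ℂ :=
  (1 / (n : ℂ)) • ∑ i : Fin n, ∑ j : Fin n, Matrix.single i j (1 : ℂ)

/-- The projection `e₂ := Σ_i E_{ii} ⊗ E_{ii}`. -/
noncomputable def e2 (n : ℕ) : Matrix (Fin n × Fin n) (Fin n × Fin n) ℂ :=
  ∑ i : Fin n, Matrix.single i i (1 : ℂ) ⊗ₖ Matrix.single i i (1 : ℂ)

lemma Du_apply {n : ℕ} (u : Matrix (Fin n) (Fin n) ℂ) (a b c d : Fin n) :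
    Du u (a,b) (c,d) = if b = d then if a = c then ((Real.sqrt n : ℝ) : ℂ) * (starRingEnd ℂ) (u a b) else 0 else 0 := by
  simp [Du, Matrix.sum_apply, Matrix.single_apply, Finset.sum_ite_eq, ite_and]

lemma u1_apply {n : ℕ} (u : Matrix (Fin n) (Fin n) ℂ) (a b c d : Fin n) :
    (((1 : Matrix (Fin n) (Fin n) ℂ) ⊗ₖ u) * Du u) (a,b) (c,d) =
      if a = c then u b d * (((Real.sqrt n : ℝ) : ℂ) * (starRingEnd ℂ) (u c d)) else 0 := by
  rw [Matrix.mul_apply, Fintype.sum_prod_type]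
  simp only [kroneckerMap_apply, Du_apply, Matrix.one_apply]
  simp [Finset.mul_sum, ite_and, Finset.sum_ite_eq, mul_comm, mul_left_comm]

lemma e1_apply (n : ℕ) (a b : Fin n) : e1 n a b = 1 / (n : ℂ) := by
  simp [e1, Matrix.sum_apply, Matrix.single_apply, ite_and, Finset.sum_ite_eq]

lemma e2_apply (n : ℕ) (a b c d : Fin n) :
    e2 n (a,b) (c,d) = if a = c then if b = d then if a = b then 1 else 0 else 0 else 0 := by
  simp [e2, Matrix.sum_apply, Matrix.single_apply, ite_and, Finset.sum_ite_eq]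
  aesop


/-- For a complex Hadamard matrix `u` and `u₁ := (I_n ⊗ u)·D_u`, one has
`Ad_{u₁}(I_n ⊗ e₁) = e₂`. -/
theorem stmt6 (n : ℕ) (u : Matrix (Fin n) (Fin n) ℂ) (hu : IsCHM u)
    (u₁ : Matrix (Fin n × Fin n) (Fin n × Fin n) ℂ)
    (hu₁ : u₁ = ((1 : Matrix (Fin n) (Fin n) ℂ) ⊗ₖ u) * Du u) :
    u₁ * ((1 : Matrix (Fin n) (Fin n) ℂ) ⊗ₖ e1 n) * u₁ᴴ = e2 n := by
  subst hu₁
  obtain rfl | hpos := Nat.eq_zero_or_pos n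
  · ext ⟨i, j⟩ _
    exact i.elim0
  have h1 : u * uᴴ = 1 := (Matrix.mem_unitaryGroup_iff.mp hu.1)
  have h1' : ∀ b a : Fin n, ∑ d, u b d * (starRingEnd ℂ) (u a d) = if b = a then 1 else 0 := by
    intro b a
    have := congrFun (congrFun h1 b) a
    simpa [Matrix.mul_apply, Matrix.one_apply, Matrix.conjTranspose_apply] using this
  have hs : (((Real.sqrt n : ℝ) : ℂ)) * ((Real.sqrt n : ℝ) : ℂ) = (n : ℂ) := by
    rw [← Complex.ofReal_mul, Real.mul_self_sqrt (by positivity)]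
    simp
  have hn : (n : ℂ) ≠ 0 := by exact_mod_cast hpos.ne'
  ext ⟨a, b⟩ ⟨e, f⟩
  rw [Matrix.mul_apply, Fintype.sum_prod_type]
  have mid : ∀ g h : Fin n,
      ((((1 : Matrix (Fin n) (Fin n) ℂ) ⊗ₖ u) * Du u) * ((1 : Matrix (Fin n) (Fin n) ℂ) ⊗ₖ e1 n)) (a,b) (g,h)
      = if a = g then if b = a then ((Real.sqrt n : ℝ) : ℂ) / n else 0 else 0 := by
    intro g h
    rw [Matrix.mul_apply, Fintype.sum_prod_type]
    simp only [u1_apply, kroneckerMap_apply, Matrix.one_apply, e1_apply, ite_mul, zero_mul]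
    rw [Finset.sum_eq_single a]
    · simp only [eq_self_iff_true, if_true]
      by_cases hag : a = g
      · simp only [if_pos hag]
        have key : ∑ x1 : Fin n, u b x1 * (((Real.sqrt n : ℝ) : ℂ) * (starRingEnd ℂ) (u a x1)) * (1 * (1 / (n:ℂ)))
            = (((Real.sqrt n : ℝ) : ℂ) / n) * ∑ x1, u b x1 * (starRingEnd ℂ) (u a x1) := by
          rw [Finset.mul_sum]
          refine Finset.sum_congr rfl fun x1 _ => ?_
          field_simp
        rw [key, h1' b a]
        by_cases hba : b = a <;> simp [hba]
      · simp [hag]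
    · intro x _ hx
      simp [Ne.symm hx]
    · simp
  simp only [mid, Matrix.conjTranspose_apply, u1_apply, e2_apply, apply_ite (star : ℂ → ℂ),
    star_zero]
  rw [Finset.sum_eq_single a]
  · simp only [eq_self_iff_true, if_true]
    by_cases hba : b = a
    · simp only [if_pos hba]
      by_cases hea : e = a
      · simp only [if_pos hea]
        have key : ∑ h : Fin n, (((Real.sqrt n : ℝ) : ℂ) / n) * star (u f h * (((Real.sqrt n : ℝ) : ℂ) * (starRingEnd ℂ) (u a h)))
            = ((((Real.sqrt n : ℝ) : ℂ) * ((Real.sqrt n : ℝ) : ℂ)) / n) * ∑ h, u a h * (starRingEnd ℂ) (u f h) := by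
          rw [Finset.mul_sum]
          refine Finset.sum_congr rfl fun h _ => ?_
          simp only [star_mul', Complex.star_def, Complex.conj_conj, Complex.conj_ofReal]
          field_simp
        rw [key, h1' a f, hs]
        simp [hea, hba, div_self hn]
      · have h2 : ¬ a = e := fun h => hea h.symm
        simp [hea, h2]
    · have h2 : ¬ a = b := fun h => hba h.symm
      simp [hba, h2]
  · intro g _ hg
    simp [Ne.symm hg]
  · simp
end

section
/- For an even integer n ≥ 4 with primitive n-th root of unity ω, let P := E_{13} + E_{21} + E_{32} + Σ_{k=4}^n E_{kk}, D₁ := diag{1,ω,…,ω^{n-1}}, D_{n/2} := D₁^{n/2}, and F_n the DFT matrix. Then for every α ∈ ℂ, Ad_{PF_n}(D_{n/2}) ≠ α·Ad_{D₁PF_n}(D_{n/2}). -/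
open Matrix

noncomputable def DFT (n : ℕ) : Matrix (Fin n) (Fin n) ℂ :=
  fun i j => (1 / ((Real.sqrt n : ℝ) : ℂ)) *
    Complex.exp (2 * Real.pi * Complex.I * (i : ℕ) * (j : ℕ) / n)

noncomputable def omg (n : ℕ) : ℂ := Complex.exp (2 * Real.pi * Complex.I / n)

noncomputable def D1 (n : ℕ) : Matrix (Fin n) (Fin n) ℂ :=
  Matrix.diagonal fun i => omg n ^ (i : ℕ)

def sigNat (m : ℕ) : ℕ := if m = 0 then 2 else if m = 1 then 0 else if m = 2 then 1 else m

lemma sigNat_lt {n m : ℕ} (hn : 4 ≤ n) (h : m < n) : sigNat m < n := by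
  unfold sigNat; split_ifs <;> omega

lemma term_eq (n : ℕ) (hn : 0 < n) (a b k : Fin n) (t : ℕ)
    (hab : (a : ℕ) + n / 2 = (b : ℕ) + n * t) :
    DFT n a k * (omg n ^ (k : ℕ)) ^ (n / 2) * star (DFT n b k) = 1 / n := by
  have hn0 : (n : ℂ) ≠ 0 := Nat.cast_ne_zero.mpr hn.ne'
  have hs : ((Real.sqrt n : ℝ) : ℂ) * ((Real.sqrt n : ℝ) : ℂ) = (n : ℂ) := by
    rw [← Complex.ofReal_mul, Real.mul_self_sqrt (Nat.cast_nonneg n)]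
    norm_num
  have hsne : ((Real.sqrt n : ℝ) : ℂ) ≠ 0 := by
    intro h; rw [h, mul_zero] at hs; exact hn0 hs.symm
  unfold DFT omg
  rw [← Complex.exp_nat_mul, ← Complex.exp_nat_mul]
  have hstar : star ((1 / ((Real.sqrt n : ℝ) : ℂ)) *
      Complex.exp (2 * Real.pi * Complex.I * (b : ℕ) * (k : ℕ) / n))
    = (1 / ((Real.sqrt n : ℝ) : ℂ)) *
      Complex.exp (-(2 * Real.pi * Complex.I * (b : ℕ) * (k : ℕ) / n)) := by
    rw [Complex.star_def, _root_.map_mul, ← Complex.exp_conj]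
    congr 1
    · simp
    · congr 1
      simp only [map_div₀, _root_.map_mul, Complex.conj_I, Complex.conj_ofReal,
        Complex.conj_natCast, map_ofNat]
      ring
  rw [hstar]
  rw [show (1 / ((Real.sqrt n : ℝ) : ℂ)) * Complex.exp (2 * Real.pi * Complex.I * (a : ℕ) * (k : ℕ) / n) *
      Complex.exp ((n / 2 : ℕ) * ((k : ℕ) * (2 * Real.pi * Complex.I / n))) *
      ((1 / ((Real.sqrt n : ℝ) : ℂ)) * Complex.exp (-(2 * Real.pi * Complex.I * (b : ℕ) * (k : ℕ) / n)))
    = (1 / ((Real.sqrt n : ℝ) : ℂ) * (1 / ((Real.sqrt n : ℝ) : ℂ))) *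
      Complex.exp (2 * Real.pi * Complex.I * (a : ℕ) * (k : ℕ) / n +
        (n / 2 : ℕ) * ((k : ℕ) * (2 * Real.pi * Complex.I / n)) +
        -(2 * Real.pi * Complex.I * (b : ℕ) * (k : ℕ) / n)) by
    rw [Complex.exp_add, Complex.exp_add]; ring]
  have hc : ((a : ℕ) : ℂ) + ((n / 2 : ℕ) : ℂ) = ((b : ℕ) : ℂ) + (n : ℂ) * (t : ℂ) := by
    exact_mod_cast congrArg (Nat.cast : ℕ → ℂ) hab
  have hexp : (2 * (Real.pi : ℂ) * Complex.I * (a : ℕ) * (k : ℕ) / n +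
        ((n / 2 : ℕ) : ℂ) * ((k : ℕ) * (2 * Real.pi * Complex.I / n)) +
        -(2 * Real.pi * Complex.I * (b : ℕ) * (k : ℕ) / n))
      = (((k : ℕ) * t : ℕ) : ℤ) * (2 * Real.pi * Complex.I) := by
    push_cast
    field_simp
    linear_combination (((k : ℕ) : ℂ)) * hc
  rw [hexp, Complex.exp_int_mul_two_pi_mul_I]
  rw [mul_one, div_mul_div_comm, one_mul, hs]

lemma Mentry (n : ℕ) (hn : 0 < n) (a b : Fin n)
    (hab : ((a : ℕ) + n / 2) % n = (b : ℕ)) :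
    ∑ k : Fin n, DFT n a k * (omg n ^ (k : ℕ)) ^ (n / 2) * star (DFT n b k) = 1 := by
  have hn0 : (n : ℂ) ≠ 0 := Nat.cast_ne_zero.mpr hn.ne'
  have ht : (a : ℕ) + n / 2 = (b : ℕ) + n * (((a : ℕ) + n / 2) / n) := by
    have := Nat.div_add_mod ((a : ℕ) + n / 2) n
    omega
  rw [Finset.sum_congr rfl fun k _ => term_eq n hn a b k _ ht]
  simp [Finset.sum_const, Finset.card_univ]
  field_simp

lemma Prow (n : ℕ) (hn : 4 ≤ n)
    (P : Matrix (Fin n) (Fin n) ℂ)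
    (hP : P = Matrix.single (⟨0, Nat.lt_of_lt_of_le (by norm_num) hn⟩ : Fin n) (⟨2, Nat.lt_of_lt_of_le (by norm_num) hn⟩ : Fin n) 1 +
      Matrix.single (⟨1, Nat.lt_of_lt_of_le (by norm_num) hn⟩ : Fin n) (⟨0, Nat.lt_of_lt_of_le (by norm_num) hn⟩ : Fin n) 1 +
      Matrix.single (⟨2, Nat.lt_of_lt_of_le (by norm_num) hn⟩ : Fin n) (⟨1, Nat.lt_of_lt_of_le (by norm_num) hn⟩ : Fin n) 1 +
      ∑ i : Fin n, if 3 ≤ (i : ℕ) then Matrix.single i i (1 : ℂ) else 0)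
    (i a : Fin n) :
    P i a = if (a : ℕ) = sigNat (i : ℕ) then 1 else 0 := by
  subst hP
  have hsum : (∑ i' : Fin n, if 3 ≤ (i' : ℕ) then Matrix.single i' i' (1 : ℂ) else 0) i a
      = if 3 ≤ (i : ℕ) ∧ (i : ℕ) = (a : ℕ) then 1 else 0 := by
    rw [Matrix.sum_apply]
    rw [Finset.sum_eq_single i]
    · by_cases h : 3 ≤ (i : ℕ)
      · simp only [h, if_true, true_and, Matrix.single, Matrix.of_apply]
        by_cases ha : (i : ℕ) = (a : ℕ)
        · rw [if_pos ha, if_pos (Fin.ext ha)]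
        · rw [if_neg ha, if_neg (fun h2 => ha (congrArg Fin.val h2))]
      · simp [h]
    · intro b _ hbi
      by_cases h : 3 ≤ (b : ℕ)
      · simp only [h, if_true, Matrix.single, Matrix.of_apply]
        rw [if_neg]
        rintro ⟨h1, -⟩; exact hbi h1
      · simp [h]
    · intro h; exact absurd (Finset.mem_univ i) h
  simp only [Matrix.add_apply]
  rw [hsum]
  simp only [Matrix.single, Matrix.of_apply, Fin.ext_iff, Fin.val_mk, sigNat]
  split_ifs <;> first | (exfalso; omega) | norm_num

/-- For even `n ≥ 4`, with `P := E_{13} + E_{21} + E_{32} + Σ_{k=4}^n E_{kk}`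
(1-indexed; here 0-indexed as `E_{02} + E_{10} + E_{21} + Σ_{k≥3} E_{kk}`) and
`D_{n/2} := D₁^{n/2}`, one has `Ad_{P·F_n}(D_{n/2}) ≠ α·Ad_{D₁·P·F_n}(D_{n/2})`
for every `α ∈ ℂ`. -/
theorem stmt18 (n : ℕ) (hn : 4 ≤ n) (he : Even n)
    (P : Matrix (Fin n) (Fin n) ℂ)
    (hP : P = Matrix.single (⟨0, by omega⟩ : Fin n) (⟨2, by omega⟩ : Fin n) 1 +
      Matrix.single (⟨1, by omega⟩ : Fin n) (⟨0, by omega⟩ : Fin n) 1 +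
      Matrix.single (⟨2, by omega⟩ : Fin n) (⟨1, by omega⟩ : Fin n) 1 +
      ∑ i : Fin n, if 3 ≤ (i : ℕ) then Matrix.single i i (1 : ℂ) else 0) :
    ∀ α : ℂ,
      (P * DFT n) * D1 n ^ (n / 2) * (P * DFT n)ᴴ ≠
        α • ((D1 n * P * DFT n) * D1 n ^ (n / 2) * (D1 n * P * DFT n)ᴴ) := by
  intro α heq
  have hn0 : (n : ℂ) ≠ 0 := Nat.cast_ne_zero.mpr (by omega)
  have h2 : n / 2 + n / 2 = n := by obtain ⟨r, hr⟩ := he; omega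
  set σ : Fin n → Fin n := fun i => ⟨sigNat (i : ℕ), sigNat_lt hn i.isLt⟩ with hσ
  have hPF : ∀ i k, (P * DFT n) i k = DFT n (σ i) k := by
    intro i k
    rw [Matrix.mul_apply]
    rw [Finset.sum_eq_single (σ i)]
    · rw [Prow n hn P hP, if_pos rfl, one_mul]
    · intro b _ hb
      rw [Prow n hn P hP, if_neg, zero_mul]
      intro hb2
      exact hb (Fin.ext hb2)
    · intro h; exact absurd (Finset.mem_univ _) h
  have hD : D1 n ^ (n / 2) = Matrix.diagonal fun i : Fin n => (omg n ^ (i : ℕ)) ^ (n / 2) := by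
    rw [D1, Matrix.diagonal_pow]
    rfl
  have hDPF : ∀ i k, (D1 n * P * DFT n) i k = omg n ^ (i : ℕ) * DFT n (σ i) k := by
    intro i k
    rw [mul_assoc, D1, Matrix.diagonal_mul, hPF]
  have hL : ∀ i j, ((P * DFT n) * D1 n ^ (n / 2) * (P * DFT n)ᴴ) i j
      = ∑ k, DFT n (σ i) k * (omg n ^ (k : ℕ)) ^ (n / 2) * star (DFT n (σ j) k) := by
    intro i j
    rw [Matrix.mul_apply]
    refine Finset.sum_congr rfl fun k _ => ?_
    rw [hD, Matrix.mul_diagonal, hPF, Matrix.conjTranspose_apply, hPF]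
  have hR : ∀ i j, ((D1 n * P * DFT n) * D1 n ^ (n / 2) * (D1 n * P * DFT n)ᴴ) i j
      = omg n ^ (i : ℕ) *
        (∑ k, DFT n (σ i) k * (omg n ^ (k : ℕ)) ^ (n / 2) * star (DFT n (σ j) k)) *
        star (omg n ^ (j : ℕ)) := by
    intro i j
    rw [Matrix.mul_apply, Finset.mul_sum, Finset.sum_mul]
    refine Finset.sum_congr rfl fun k _ => ?_
    rw [hD, Matrix.mul_diagonal, hDPF, Matrix.conjTranspose_apply, hDPF, StarMul.star_mul]
    ring
  set jv : ℕ := if n = 4 then 1 else 2 + n / 2 with hjv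
  have hjvlt : jv < n := by rw [hjv]; split_ifs <;> omega
  set j : Fin n := ⟨jv, hjvlt⟩ with hj
  set z0 : Fin n := ⟨0, by omega⟩ with hz0
  have hσ0 : ((σ z0 : Fin n) : ℕ) = 2 := by simp [hσ, hz0, sigNat]
  have hσj : ((σ j : Fin n) : ℕ) = (2 + n / 2) % n := by
    by_cases h4 : n = 4
    · subst h4
      simp [hσ, hj, hjv, sigNat]
    · have h5 : 5 ≤ n := by
        rcases Nat.lt_or_ge n 5 with h | h
        · exact absurd (by omega : n = 4) h4
        · exact h
      have : jv = 2 + n / 2 := by rw [hjv, if_neg h4]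
      rw [Nat.mod_eq_of_lt (by omega : 2 + n / 2 < n)]
      show sigNat jv = 2 + n / 2
      rw [this, sigNat]
      split_ifs <;> omega
  have hM1 : ∑ k, DFT n (σ z0) k * (omg n ^ (k : ℕ)) ^ (n / 2) * star (DFT n (σ j) k) = 1 := by
    refine Mentry n (by omega) _ _ ?_
    rw [hσ0, hσj]
  have hM2 : ∑ k, DFT n (σ j) k * (omg n ^ (k : ℕ)) ^ (n / 2) * star (DFT n (σ z0) k) = 1 := by
    refine Mentry n (by omega) _ _ ?_
    rw [hσ0, hσj]
    by_cases h4 : n = 4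
    · subst h4; norm_num
    · rw [Nat.mod_eq_of_lt (by omega : 2 + n / 2 < n)]
      rw [show 2 + n / 2 + n / 2 = 2 + n by omega, Nat.add_mod_right]
      exact Nat.mod_eq_of_lt (by omega)
  have e1 := congrFun (congrFun heq z0) j
  have e2 := congrFun (congrFun heq j) z0
  rw [hL, Matrix.smul_apply, hR, smul_eq_mul, hM1] at e1
  rw [hL, Matrix.smul_apply, hR, smul_eq_mul, hM2] at e2
  have hz0v : ((z0 : Fin n) : ℕ) = 0 := rfl
  rw [hz0v, pow_zero] at e1 e2
  have e1' : (1 : ℂ) = α * star (omg n ^ (jv : ℕ)) := by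
    rw [e1]; simp [hj]
  have e2' : (1 : ℂ) = α * omg n ^ (jv : ℕ) := by
    rw [e2]; simp [hj]
  have hstar : star (omg n) = Complex.exp (-(2 * Real.pi * Complex.I / n)) := by
    rw [omg, Complex.star_def, ← Complex.exp_conj]
    congr 1
    simp only [map_div₀, _root_.map_mul, Complex.conj_I, Complex.conj_ofReal,
      Complex.conj_natCast, map_ofNat]
    ring
  have hinv : omg n * star (omg n) = 1 := by
    rw [hstar, omg, ← Complex.exp_add]
    rw [show 2 * (Real.pi : ℂ) * Complex.I / n + -(2 * Real.pi * Complex.I / n) = 0 by ring]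
    exact Complex.exp_zero
  have hinvp : omg n ^ jv * star (omg n ^ jv) = 1 := by
    rw [star_pow, ← mul_pow, hinv, one_pow]
  have hα : α = omg n ^ jv := by
    linear_combination (-(omg n ^ jv)) * e1' + (-α) * hinvp
  rw [hα] at e2'
  have hone : omg n ^ (2 * jv) = 1 := by
    rw [two_mul, pow_add]
    exact e2'.symm
  rw [omg, ← Complex.exp_nat_mul] at hone
  obtain ⟨m, hm⟩ := Complex.exp_eq_one_iff.mp hone
  have hπ : (Real.pi : ℂ) ≠ 0 := Complex.ofReal_ne_zero.mpr Real.pi_ne_zero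
  have hI : Complex.I ≠ 0 := Complex.I_ne_zero
  have hmn : ((2 * jv : ℕ) : ℂ) = (m : ℂ) * n := by
    field_simp at hm
    have hne : (2 * (Real.pi : ℂ) * Complex.I) ≠ 0 := by
      intro h
      rcases mul_eq_zero.mp h with h' | h'
      · rcases mul_eq_zero.mp h' with h'' | h''
        · norm_num at h''
        · exact hπ h''
      · exact hI h'
    have hmm : (2 * (jv : ℂ)) * (2 * (Real.pi : ℂ) * Complex.I)
        = ((m : ℂ) * n) * (2 * (Real.pi : ℂ) * Complex.I) := by
        push_cast at hm; linear_combination (2 * (Real.pi : ℂ) * Complex.I) * hm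
    have hc := mul_right_cancel₀ hne hmm
    push_cast
    linear_combination hc
  have hmz : ((2 * jv : ℕ) : ℤ) = m * n := by exact_mod_cast hmn
  have hdvd : n ∣ 2 * jv := by
    have : (n : ℤ) ∣ ((2 * jv : ℕ) : ℤ) := ⟨m, by rw [hmz]; ring⟩
    exact_mod_cast this
  by_cases h4 : n = 4
  · have : jv = 1 := by rw [hjv, if_pos h4]
    rw [this, h4] at hdvd
    exact absurd (Nat.le_of_dvd (by norm_num) hdvd) (by norm_num)
  · have h5 : 5 ≤ n := by omega
    have hjv' : jv = 2 + n / 2 := by rw [hjv, if_neg h4]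
    have : n ∣ n + 4 := by
      rw [show n + 4 = 2 * jv by omega] at *
      exact hdvd
    have h4' : n ∣ 4 := (Nat.dvd_add_right (dvd_refl n)).mp this
    exact absurd (Nat.le_of_dvd (by norm_num) h4') (by omega)
end
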